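/- arXiv:1001.2994 — 5 statements merged into one kernel-verified Lean document; each statement's English description precedes it below -/
import Mathlib

section
/- Let d ≥ 1, let q, k ∈ (1,∞) with q − 1 < k, and set α := 1 − (q−1)/k. There exists a constant C = C(d,q,k) ∈ (0,∞) such that for all Borel probability measures f, g on ℝ^d with M_{k+1} < ∞ one has W_q(f,g) ≤ C · M_{k+1}^{1−α} · W_1(f,g)^α. -/
open MeasureTheory Filter
open scoped ENNReal BigOperators Topology

noncomputable section


/-- `ℝ^d` as a Euclidean space. -/
abbrev Euc (d : ℕ) : Type := EuclideanSpace ℝ (Fin d)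

/-- Transport cost `W_q(f,g) = inf_π ∫ |x-y|^q dπ` (no `q`-th root), valued in `ℝ≥0∞`. -/
def transportCost {d : ℕ} (q : ℝ) (f g : Measure (Euc d)) : ℝ≥0∞ :=
  ⨅ (π : Measure (Euc d × Euc d))
    (_ : π.map Prod.fst = f ∧ π.map Prod.snd = g),
      ∫⁻ p, ENNReal.ofReal (dist p.1 p.2 ^ q) ∂π

/-- `(k+1)`-moment `M_{k+1}(f) = ∫ (1+|x|^{k+1}) df`, valued in `ℝ≥0∞`. -/
def momentE {d : ℕ} (k : ℝ) (f : Measure (Euc d)) : ℝ≥0∞ :=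
  ∫⁻ x, ENNReal.ofReal (1 + ‖x‖ ^ k) ∂f

/-- Pointwise interpolation inequality `a^q ≤ r^{q-1} a + r^{q-1-k} a^{k+1}`. -/
lemma ptwise {q k : ℝ} (hq : 1 < q) (hqk : q - 1 < k)
    {a r : ℝ} (ha : 0 ≤ a) (hr : 0 < r) :
    a ^ q ≤ r ^ (q - 1) * a + r ^ (q - 1 - k) * a ^ (k + 1) := by
  have hk0 : 0 < k := lt_trans (by linarith) hqk
  rcases eq_or_lt_of_le ha with h0 | h0
  · rw [← h0, Real.zero_rpow (by positivity), Real.zero_rpow (by positivity)]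
    simp
  rcases le_or_gt a r with h | h
  · have h1 : a ^ q = a ^ (q - 1) * a := by
      have h := Real.rpow_add h0 (q - 1) 1
      rw [Real.rpow_one, show q - 1 + 1 = q by ring] at h
      exact h
    have h2 : a ^ (q - 1) ≤ r ^ (q - 1) :=
      Real.rpow_le_rpow ha h (by linarith)
    have h3 : 0 ≤ r ^ (q - 1 - k) * a ^ (k + 1) := by positivity
    nlinarith [Real.rpow_nonneg ha 1, h0.le]
  · have h1 : a ^ q = a ^ (q - 1 - k) * a ^ (k + 1) := by
      have h := Real.rpow_add h0 (q - 1 - k) (k + 1)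
      rw [show q - 1 - k + (k + 1) = q by ring] at h
      exact h
    have h2 : a ^ (q - 1 - k) ≤ r ^ (q - 1 - k) :=
      Real.rpow_le_rpow_of_nonpos hr h.le (by linarith)
    have h3 : 0 ≤ r ^ (q - 1) * a := by positivity
    nlinarith [Real.rpow_pos_of_pos h0 (k + 1)]

/-- `(a+b)^p ≤ 2^p (a^p + b^p)` for nonnegative reals. -/
lemma add_rpow_le {a b p : ℝ} (ha : 0 ≤ a) (hb : 0 ≤ b) (hp : 0 ≤ p) :
    (a + b) ^ p ≤ 2 ^ p * (a ^ p + b ^ p) := by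
  have h1 : a + b ≤ 2 * max a b := by
    rcases max_cases a b with ⟨h, h'⟩ | ⟨h, h'⟩ <;> rw [h] <;> linarith
  have h2 : (a + b) ^ p ≤ (2 * max a b) ^ p :=
    Real.rpow_le_rpow (by linarith) h1 hp
  rw [Real.mul_rpow (by norm_num) (le_max_iff.2 (Or.inl ha))] at h2
  refine h2.trans ?_
  have h3 : (max a b) ^ p ≤ a ^ p + b ^ p := by
    rcases max_cases a b with ⟨h, _⟩ | ⟨h, _⟩ <;> rw [h]
    · nlinarith [Real.rpow_nonneg hb p]
    · nlinarith [Real.rpow_nonneg ha p]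
  have : (0:ℝ) ≤ 2 ^ p := Real.rpow_nonneg (by norm_num) p
  nlinarith

lemma hmeas_dist {d : ℕ} {c : ℝ} (hc : 0 ≤ c) :
    Measurable fun p : Euc d × Euc d => ENNReal.ofReal (dist p.1 p.2 ^ c) :=
  (((Real.continuous_rpow_const hc).comp continuous_dist).measurable).ennreal_ofReal

lemma hmeas_mom {d : ℕ} {c : ℝ} (hc : 0 ≤ c) :
    Measurable fun x : Euc d => ENNReal.ofReal (1 + ‖x‖ ^ c) :=
  ((continuous_const.add
    ((Real.continuous_rpow_const hc).comp continuous_norm)).measurable).ennreal_ofReal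

/-- The `(k+1)`-moment of a probability measure is at least `1`. -/
lemma momentE_ge_one {d : ℕ} (k : ℝ) (f : Measure (Euc d)) [IsProbabilityMeasure f] :
    1 ≤ momentE k f := by
  have h : (1 : ℝ≥0∞) = ∫⁻ _ : Euc d, 1 ∂f := by simp
  rw [h, momentE]
  refine lintegral_mono fun x => ?_
  rw [ENNReal.one_le_ofReal]
  nlinarith [Real.rpow_nonneg (norm_nonneg x) k]

/-- Bound the `(k+1)`-moment of the transport distance by the moments of the marginals. -/
lemma Sbound {d : ℕ} {k : ℝ} (hk : 1 < k) {f g : Measure (Euc d)}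
    {π : Measure (Euc d × Euc d)} (h1 : π.map Prod.fst = f) (h2 : π.map Prod.snd = g) :
    ∫⁻ p, ENNReal.ofReal (dist p.1 p.2 ^ (k + 1)) ∂π ≤
      ENNReal.ofReal (2 ^ (k + 1)) * (momentE (k + 1) f + momentE (k + 1) g) := by
  have hk1 : (0:ℝ) ≤ k + 1 := by linarith
  have hptw : ∀ p : Euc d × Euc d,
      ENNReal.ofReal (dist p.1 p.2 ^ (k + 1)) ≤
        ENNReal.ofReal (2 ^ (k + 1)) *
          (ENNReal.ofReal (1 + ‖p.1‖ ^ (k + 1)) + ENNReal.ofReal (1 + ‖p.2‖ ^ (k + 1))) := by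
    intro p
    rw [← ENNReal.ofReal_add (by positivity) (by positivity),
        ← ENNReal.ofReal_mul (by positivity)]
    apply ENNReal.ofReal_le_ofReal
    have hd : dist p.1 p.2 ≤ ‖p.1‖ + ‖p.2‖ := dist_le_norm_add_norm _ _
    have ha : dist p.1 p.2 ^ (k + 1) ≤ (‖p.1‖ + ‖p.2‖) ^ (k + 1) :=
      Real.rpow_le_rpow dist_nonneg hd hk1
    have hb := add_rpow_le (norm_nonneg p.1) (norm_nonneg p.2) hk1
    have hc : ‖p.1‖ ^ (k + 1) + ‖p.2‖ ^ (k + 1) ≤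
        1 + ‖p.1‖ ^ (k + 1) + (1 + ‖p.2‖ ^ (k + 1)) := by linarith
    have h2p : (0:ℝ) ≤ 2 ^ (k + 1) := Real.rpow_nonneg (by norm_num) _
    nlinarith
  calc ∫⁻ p, ENNReal.ofReal (dist p.1 p.2 ^ (k + 1)) ∂π
      ≤ ∫⁻ p, ENNReal.ofReal (2 ^ (k + 1)) *
          (ENNReal.ofReal (1 + ‖p.1‖ ^ (k + 1)) + ENNReal.ofReal (1 + ‖p.2‖ ^ (k + 1))) ∂π :=
        lintegral_mono hptw
    _ = ENNReal.ofReal (2 ^ (k + 1)) *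
        ((∫⁻ p, ENNReal.ofReal (1 + ‖p.1‖ ^ (k + 1)) ∂π) +
          ∫⁻ p, ENNReal.ofReal (1 + ‖p.2‖ ^ (k + 1)) ∂π) := by
        have hm1' : Measurable fun p : Euc d × Euc d => ENNReal.ofReal (1 + ‖p.1‖ ^ (k + 1)) :=
          (hmeas_mom hk1).comp measurable_fst
        have hm2' : Measurable fun p : Euc d × Euc d => ENNReal.ofReal (1 + ‖p.2‖ ^ (k + 1)) :=
          (hmeas_mom hk1).comp measurable_snd
        rw [lintegral_const_mul _ (show Measurable fun p : Euc d × Euc d => ENNReal.ofReal (1 + ‖p.1‖ ^ (k + 1)) + ENNReal.ofReal (1 + ‖p.2‖ ^ (k + 1)) from hm1'.add hm2'), lintegral_add_left hm1']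
    _ = ENNReal.ofReal (2 ^ (k + 1)) * (momentE (k + 1) f + momentE (k + 1) g) := by
        rw [momentE, momentE, ← h1, ← h2,
          lintegral_map (hmeas_mom hk1) measurable_fst,
          lintegral_map (hmeas_mom hk1) measurable_snd]

/-- The key per-coupling interpolation bound. -/
lemma key {d : ℕ} {q k : ℝ} (hq : 1 < q) (hk : 1 < k) (hqk : q - 1 < k)
    {M : ℝ≥0∞} (hM1 : 1 ≤ M) (hMt : M ≠ ∞)
    {π : Measure (Euc d × Euc d)}
    (hS : ∫⁻ p, ENNReal.ofReal (dist p.1 p.2 ^ (k + 1)) ∂π ≤ ENNReal.ofReal (2 ^ (k + 2)) * M) :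
    ∫⁻ p, ENNReal.ofReal (dist p.1 p.2 ^ q) ∂π ≤
      ENNReal.ofReal (1 + 2 ^ (k + 2)) * M ^ ((q - 1) / k)
        * (∫⁻ p, ENNReal.ofReal (dist p.1 p.2) ∂π) ^ (1 - (q - 1) / k) := by
  have ptw : ∀ (a r : ℝ), 0 ≤ a → 0 < r →
      a ^ q ≤ r ^ (q - 1) * a + r ^ (q - 1 - k) * a ^ (k + 1) :=
    fun a r ha hr => ptwise hq hqk ha hr
  have hk0 : (0:ℝ) < k := by linarith
  set β : ℝ := (q - 1) / k with hβdef
  have hβ0 : 0 < β := div_pos (by linarith) hk0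
  have hβ1 : β < 1 := (div_lt_one hk0).2 hqk
  set T : ℝ≥0∞ := ∫⁻ p, ENNReal.ofReal (dist p.1 p.2) ∂π with hT
  rcases eq_or_ne T 0 with h0 | h0
  · -- dist = 0 a.e., so LHS = 0
    have hmeas : Measurable fun p : Euc d × Euc d => ENNReal.ofReal (dist p.1 p.2) := by
      simpa using hmeas_dist (d := d) (c := 1) zero_le_one
    have hae : ∀ᵐ p ∂π, ENNReal.ofReal (dist p.1 p.2) = 0 :=
      (lintegral_eq_zero_iff hmeas).1 h0
    have : ∫⁻ p, ENNReal.ofReal (dist p.1 p.2 ^ q) ∂π = 0 := by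
      rw [lintegral_eq_zero_iff (hmeas_dist (by linarith))]
      filter_upwards [hae] with p hp
      have : dist p.1 p.2 = 0 := le_antisymm (by simpa [ENNReal.ofReal_eq_zero] using hp) dist_nonneg
      simp [this, Real.zero_rpow (by positivity : q ≠ 0)]
    simp [this]
  rcases eq_or_ne T ∞ with htop | htop
  · -- RHS = ∞
    have h1 : (1:ℝ≥0∞) ≤ ENNReal.ofReal (1 + 2 ^ (k + 2)) * M ^ β := by
      have ha : (1:ℝ≥0∞) ≤ ENNReal.ofReal (1 + 2 ^ (k + 2)) := by
        rw [ENNReal.one_le_ofReal]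
        nlinarith [Real.rpow_nonneg (by norm_num : (0:ℝ) ≤ 2) (k + 2)]
      have hb : (1:ℝ≥0∞) ≤ M ^ β := by
        calc (1:ℝ≥0∞) = 1 ^ β := (ENNReal.one_rpow β).symm
        _ ≤ M ^ β := ENNReal.rpow_le_rpow hM1 hβ0.le
      calc (1:ℝ≥0∞) = 1 * 1 := (one_mul 1).symm
      _ ≤ _ := mul_le_mul' ha hb
    rw [htop, ENNReal.top_rpow_of_pos (by linarith), ENNReal.mul_top (by
      intro hc
      rw [hc] at h1
      exact absurd h1 (by simp))]
    exact le_top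
  · -- main case
    set t : ℝ := T.toReal with htdef
    have ht0 : 0 < t := ENNReal.toReal_pos h0 htop
    set m : ℝ := M.toReal with hmdef
    have hm1 : (1:ℝ) ≤ m := by
      simpa using ENNReal.toReal_mono hMt hM1
    have hm0 : (0:ℝ) < m := by linarith
    have hmt : 0 < m / t := div_pos hm0 ht0
    set r : ℝ := (m / t) ^ (1 / k) with hrdef
    have hr : 0 < r := Real.rpow_pos_of_pos hmt _
    have hmeas1 : Measurable fun p : Euc d × Euc d => ENNReal.ofReal (dist p.1 p.2) := by
      simpa using hmeas_dist (d := d) (c := 1) zero_le_one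
    have step1 : ∫⁻ p, ENNReal.ofReal (dist p.1 p.2 ^ q) ∂π ≤
        ENNReal.ofReal (r ^ (q - 1)) * T + ENNReal.ofReal (r ^ (q - 1 - k)) *
          ∫⁻ p, ENNReal.ofReal (dist p.1 p.2 ^ (k + 1)) ∂π := by
      rw [hT, ← lintegral_const_mul _ hmeas1,
          ← lintegral_const_mul _ (hmeas_dist (by linarith : (0:ℝ) ≤ k + 1)),
          ← lintegral_add_left (show Measurable fun p : Euc d × Euc d => ENNReal.ofReal (r ^ (q - 1)) * ENNReal.ofReal (dist p.1 p.2) from measurable_const.mul hmeas1)]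
      refine lintegral_mono fun p => ?_
      rw [← ENNReal.ofReal_mul (by positivity), ← ENNReal.ofReal_mul (by positivity),
          ← ENNReal.ofReal_add (by positivity) (by positivity)]
      exact ENNReal.ofReal_le_ofReal (ptw _ _ dist_nonneg hr)
    have step2 := step1.trans (add_le_add_right (mul_le_mul_right hS _) _)
    have hTr : T = ENNReal.ofReal t := (ENNReal.ofReal_toReal htop).symm
    have hMr : M = ENNReal.ofReal m := (ENNReal.ofReal_toReal hMt).symm
    have htβ : (0:ℝ) < t ^ β := Real.rpow_pos_of_pos ht0 β
    have id1 : r ^ (q - 1) * t = m ^ β * t ^ (1 - β) := by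
      rw [hrdef, ← Real.rpow_mul hmt.le,
          show 1 / k * (q - 1) = β by rw [hβdef]; ring,
          Real.div_rpow hm0.le ht0.le, Real.rpow_sub ht0, Real.rpow_one]
      field_simp
    have htβ1 : t ^ (β - 1) = t ^ β / t := by
      rw [Real.rpow_sub ht0, Real.rpow_one]
    have hmβ1 : m ^ (β - 1) = m ^ β / m := by
      rw [Real.rpow_sub hm0, Real.rpow_one]
    have ht1β : t ^ (1 - β) = t / t ^ β := by
      rw [Real.rpow_sub ht0, Real.rpow_one]
    have id2 : r ^ (q - 1 - k) * (2 ^ (k + 2) * m) = 2 ^ (k + 2) * (m ^ β * t ^ (1 - β)) := by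
      rw [hrdef, ← Real.rpow_mul hmt.le,
          show 1 / k * (q - 1 - k) = β - 1 by rw [hβdef]; field_simp,
          Real.div_rpow hm0.le ht0.le, htβ1, hmβ1, ht1β]
      field_simp
    calc ∫⁻ p, ENNReal.ofReal (dist p.1 p.2 ^ q) ∂π
        ≤ ENNReal.ofReal (r ^ (q - 1)) * T +
            ENNReal.ofReal (r ^ (q - 1 - k)) * (ENNReal.ofReal (2 ^ (k + 2)) * M) := step2
      _ = ENNReal.ofReal (r ^ (q - 1) * t) +
            ENNReal.ofReal (r ^ (q - 1 - k) * (2 ^ (k + 2) * m)) := by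
          rw [hTr, hMr, ← ENNReal.ofReal_mul (by positivity),
            ← ENNReal.ofReal_mul (by positivity), ← ENNReal.ofReal_mul (by positivity)]
      _ = ENNReal.ofReal ((1 + 2 ^ (k + 2)) * (m ^ β * t ^ (1 - β))) := by
          rw [id1, id2, ← ENNReal.ofReal_add (by positivity) (by positivity)]
          ring_nf
      _ = ENNReal.ofReal (1 + 2 ^ (k + 2)) * M ^ β * T ^ (1 - β) := by
          rw [ENNReal.ofReal_mul (by positivity), ENNReal.ofReal_mul (by positivity),
            hTr, hMr, ENNReal.ofReal_rpow_of_nonneg hm0.le hβ0.le,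
            ENNReal.ofReal_rpow_of_nonneg ht0.le (by linarith), mul_assoc]

theorem stmt0 (d : ℕ) (hd : 1 ≤ d) (q k : ℝ) (hq : 1 < q) (hk : 1 < k) (hqk : q - 1 < k) :
    ∃ C : ℝ, 0 < C ∧
      ∀ f g : Measure (Euc d), IsProbabilityMeasure f → IsProbabilityMeasure g →
        momentE (k + 1) f < ∞ → momentE (k + 1) g < ∞ →
        transportCost q f g ≤
          ENNReal.ofReal C * max (momentE (k + 1) f) (momentE (k + 1) g)
              ^ (1 - (1 - (q - 1) / k))
            * transportCost 1 f g ^ (1 - (q - 1) / k) := by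
  have hk0 : (0:ℝ) < k := by linarith
  refine ⟨1 + 2 ^ (k + 2), by positivity, ?_⟩
  intro f g hf hg hmf hmg
  have hα : 0 < 1 - (q - 1) / k := by
    have : (q - 1) / k < 1 := (div_lt_one hk0).2 hqk
    linarith
  set M : ℝ≥0∞ := max (momentE (k + 1) f) (momentE (k + 1) g) with hMdef
  have hM1 : 1 ≤ M := le_trans (momentE_ge_one (k + 1) f) (le_max_left _ _)
  have hMt : M ≠ ∞ := (max_lt hmf hmg).ne
  have hβeq : 1 - (1 - (q - 1) / k) = (q - 1) / k := by ring
  rw [hβeq]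
  -- per-coupling bound
  have keyπ : ∀ π : Measure (Euc d × Euc d),
      (π.map Prod.fst = f ∧ π.map Prod.snd = g) →
      transportCost q f g ≤ ENNReal.ofReal (1 + 2 ^ (k + 2)) * M ^ ((q - 1) / k) *
        (∫⁻ p, ENNReal.ofReal (dist p.1 p.2) ∂π) ^ (1 - (q - 1) / k) := by
    intro π hπ
    have hS : ∫⁻ p, ENNReal.ofReal (dist p.1 p.2 ^ (k + 1)) ∂π ≤
        ENNReal.ofReal (2 ^ (k + 2)) * M := by
      calc ∫⁻ p, ENNReal.ofReal (dist p.1 p.2 ^ (k + 1)) ∂π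
          ≤ ENNReal.ofReal (2 ^ (k + 1)) * (momentE (k + 1) f + momentE (k + 1) g) :=
            Sbound hk hπ.1 hπ.2
        _ ≤ ENNReal.ofReal (2 ^ (k + 1)) * (M + M) :=
            mul_le_mul_right (add_le_add (le_max_left _ _) (le_max_right _ _)) _
        _ = ENNReal.ofReal (2 ^ (k + 2)) * M := by
            rw [← two_mul, ← mul_assoc,
              show ((2:ℝ≥0∞)) = ENNReal.ofReal 2 by norm_num,
              ← ENNReal.ofReal_mul (by positivity),
              show (2:ℝ) ^ (k + 1) * 2 = 2 ^ (k + 2) by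
                have h2 := Real.rpow_add (by norm_num : (0:ℝ) < 2) (k + 1) 1
                rw [Real.rpow_one, show (k + 1) + 1 = k + 2 by ring] at h2
                exact h2.symm]
    have hle : transportCost q f g ≤ ∫⁻ p, ENNReal.ofReal (dist p.1 p.2 ^ q) ∂π := by
      simp only [transportCost]
      exact iInf₂_le π hπ
    exact hle.trans (key hq hk hqk hM1 hMt hS)
  -- pass to the infimum over couplings
  set c : ℝ≥0∞ := ENNReal.ofReal (1 + 2 ^ (k + 2)) * M ^ ((q - 1) / k) with hcdef
  have hc0 : c ≠ 0 := by
    apply mul_ne_zero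
    · simp only [ne_eq, ENNReal.ofReal_eq_zero, not_le]
      nlinarith [Real.rpow_nonneg (by norm_num : (0:ℝ) ≤ 2) (k + 2)]
    · intro h
      have : (1:ℝ≥0∞) ≤ M ^ ((q - 1) / k) := by
        calc (1:ℝ≥0∞) = 1 ^ ((q - 1) / k) := (ENNReal.one_rpow _).symm
        _ ≤ M ^ ((q - 1) / k) :=
            ENNReal.rpow_le_rpow hM1 (le_of_lt (div_pos (by linarith) hk0))
      rw [h] at this
      exact absurd this (by simp)
  have hct : c ≠ ∞ := by
    apply ENNReal.mul_ne_top ENNReal.ofReal_ne_top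
    exact ENNReal.rpow_ne_top_of_nonneg (le_of_lt (div_pos (by linarith) hk0)) hMt
  have hW : transportCost 1 f g ^ (1 - (q - 1) / k) =
      ⨅ (π : Measure (Euc d × Euc d))
        (_ : π.map Prod.fst = f ∧ π.map Prod.snd = g),
          (∫⁻ p, ENNReal.ofReal (dist p.1 p.2) ∂π) ^ (1 - (q - 1) / k) := by
    have e := ENNReal.orderIsoRpow (1 - (q - 1) / k) hα
    have happ : ∀ x : ℝ≥0∞, x ^ (1 - (q - 1) / k) =
        (ENNReal.orderIsoRpow (1 - (q - 1) / k) hα) x := fun x => rfl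
    simp only [transportCost, Real.rpow_one, happ]
    rw [OrderIso.map_iInf]
    exact iInf_congr fun π => OrderIso.map_iInf _ _
  show transportCost q f g ≤ c * transportCost 1 f g ^ (1 - (q - 1) / k)
  rw [hW, mul_comm, ← ENNReal.div_le_iff_le_mul (Or.inl hc0) (Or.inl hct)]
  refine le_iInf₂ fun π hπ => ?_
  rw [ENNReal.div_le_iff_le_mul (Or.inl hc0) (Or.inl hct), mul_comm]
  exact keyπ π hπ

end
end

section
/- Let d ≥ 1 and s ∈ (0,1]. For all Borel probability measures f, g on ℝ^d one has |f−g|_s ≤ 2^{1−s} · W_s(f,g) and W_s(f,g) ≤ W_1(f,g)^s. -/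
open MeasureTheory Filter
open scoped ENNReal BigOperators Topology

noncomputable section


/-- Fourier transform of a measure: `f̂(ξ) = ∫ e^{-i v·ξ} df(v)`. -/
def fourierM {d : ℕ} (f : Measure (Euc d)) (ξ : Euc d) : ℂ :=
  ∫ v, Complex.exp (-(Complex.I * ((inner ℝ v ξ : ℝ) : ℂ))) ∂f

/-- Toscani's Fourier-based distance `|f - g|_s`, valued in `ℝ≥0∞`. -/
def fourierDist {d : ℕ} (s : ℝ) (f g : Measure (Euc d)) : ℝ≥0∞ :=
  ⨆ (ξ : Euc d) (_ : ξ ≠ 0),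
    ENNReal.ofReal (‖fourierM f ξ - fourierM g ξ‖ / ‖ξ‖ ^ s)

lemma exp_lip (a b : ℝ) :
    ‖Complex.exp (-(Complex.I * a)) - Complex.exp (-(Complex.I * b))‖ ≤ |a - b| := by
  have hdiff : ∀ x : ℝ, HasDerivAt (fun t : ℝ => Complex.exp (-(Complex.I * t)))
      (Complex.exp (-(Complex.I * x)) * (-Complex.I)) x := by
    intro x
    have h1 : HasDerivAt (fun t : ℝ => ((t : ℂ))) 1 x := Complex.ofRealCLM.hasDerivAt
    have h2 : HasDerivAt (fun t : ℝ => -(Complex.I * (t : ℂ))) (-Complex.I) x := by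
      have h3 := (h1.const_mul Complex.I).neg
      simp only [mul_one] at h3
      exact h3
    simpa using h2.cexp
  have hlip : LipschitzWith 1 (fun t : ℝ => Complex.exp (-(Complex.I * t))) := by
    apply lipschitzWith_of_nnnorm_deriv_le (fun x => (hdiff x).differentiableAt)
    intro x
    rw [(hdiff x).deriv, ← NNReal.coe_le_coe, coe_nnnorm]
    simp [Complex.norm_exp]
  simpa [dist_eq_norm] using hlip.dist_le_mul a b

lemma min_le_rpow {s t : ℝ} (hs : 0 < s) (hs1 : s ≤ 1) (ht : 0 ≤ t) :
    min 2 t ≤ 2 ^ (1 - s) * t ^ s := by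
  rcases eq_or_lt_of_le ht with h0 | h0
  · simp [← h0, Real.zero_rpow hs.ne']
  rcases le_total t 2 with h | h
  · rw [min_eq_right h]
    calc t = t ^ (1 - s) * t ^ s := by
          rw [← Real.rpow_add h0]; norm_num
      _ ≤ 2 ^ (1 - s) * t ^ s :=
          mul_le_mul_of_nonneg_right (Real.rpow_le_rpow ht h (by linarith))
            (Real.rpow_nonneg ht s)
  · rw [min_eq_left h]
    calc (2 : ℝ) = 2 ^ (1 - s) * 2 ^ s := by
          rw [← Real.rpow_add (by norm_num)]; norm_num
      _ ≤ 2 ^ (1 - s) * t ^ s :=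
          mul_le_mul_of_nonneg_left (Real.rpow_le_rpow (by norm_num) h hs.le)
            (by positivity)

theorem stmt1 (d : ℕ) (hd : 1 ≤ d) (s : ℝ) (hs : 0 < s) (hs1 : s ≤ 1)
    (f g : Measure (Euc d)) (hf : IsProbabilityMeasure f) (hg : IsProbabilityMeasure g) :
    fourierDist s f g ≤ ENNReal.ofReal (2 ^ (1 - s)) * transportCost s f g ∧
      transportCost s f g ≤ transportCost 1 f g ^ s := by
  have hc2 : (0:ℝ) < 2 ^ (1 - s) := by positivity
  constructor
  · -- Part 1
    rw [fourierDist, transportCost, ENNReal.mul_iInf_of_ne (ENNReal.ofReal_pos.mpr hc2).ne'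
        ENNReal.ofReal_ne_top]
    refine iSup₂_le fun ξ hξ => le_iInf fun π => ?_
    rw [ENNReal.mul_iInf_of_ne (ENNReal.ofReal_pos.mpr hc2).ne' ENNReal.ofReal_ne_top]
    refine le_iInf fun hπ => ?_
    obtain ⟨hπ1, hπ2⟩ := hπ
    set L := ∫⁻ p : Euc d × Euc d, ENNReal.ofReal (dist p.1 p.2 ^ s) ∂π with hLdef
    by_cases hL : L = ∞
    · rw [hL, ENNReal.mul_top (ENNReal.ofReal_pos.mpr hc2).ne']
      exact le_top
    -- π is a finite (probability) measure
    have hπuniv : π Set.univ = 1 := by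
      have h := congrArg (fun μ : Measure (Euc d) => μ Set.univ) hπ1
      simp only [Measure.map_apply measurable_fst MeasurableSet.univ, Set.preimage_univ] at h
      rw [h, hf.measure_univ]
    have hπprob : IsProbabilityMeasure π := ⟨hπuniv⟩
    -- the character
    set E : Euc d → ℂ := fun v => Complex.exp (-(Complex.I * ((inner ℝ v ξ : ℝ) : ℂ))) with hEdef
    have hcinner : Continuous fun v : Euc d => (inner ℝ v ξ : ℝ) :=
      continuous_id.inner continuous_const
    have hE : Continuous E :=
      Complex.continuous_exp.comp
        (continuous_const.mul (Complex.continuous_ofReal.comp hcinner)).neg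
    have hEnorm : ∀ v, ‖E v‖ = 1 := by
      intro v
      rw [hEdef]
      simp [Complex.norm_exp]
    have hint1 : Integrable (fun p : Euc d × Euc d => E p.1) π := by
      refine Integrable.mono' (integrable_const 1)
        ((hE.comp continuous_fst).aestronglyMeasurable) ?_
      filter_upwards with p
      rw [hEnorm]
    have hint2 : Integrable (fun p : Euc d × Euc d => E p.2) π := by
      refine Integrable.mono' (integrable_const 1)
        ((hE.comp continuous_snd).aestronglyMeasurable) ?_
      filter_upwards with p
      rw [hEnorm]
    -- rewrite the Fourier transforms over the coupling
    have hfF : fourierM f ξ = ∫ p : Euc d × Euc d, E p.1 ∂π := by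
      rw [fourierM, ← hπ1, integral_map measurable_fst.aemeasurable hE.aestronglyMeasurable]
    have hgF : fourierM g ξ = ∫ p : Euc d × Euc d, E p.2 ∂π := by
      rw [fourierM, ← hπ2, integral_map measurable_snd.aemeasurable hE.aestronglyMeasurable]
    -- integrability of dist ^ s
    have hdscont : Continuous fun p : Euc d × Euc d => dist p.1 p.2 ^ s :=
      (continuous_fst.dist continuous_snd).rpow_const (fun p => Or.inr hs.le)
    have hdnn : ∀ p : Euc d × Euc d, 0 ≤ dist p.1 p.2 ^ s :=
      fun p => Real.rpow_nonneg dist_nonneg s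
    have hds : Integrable (fun p : Euc d × Euc d => dist p.1 p.2 ^ s) π := by
      refine ⟨hdscont.aestronglyMeasurable, ?_⟩
      rw [hasFiniteIntegral_iff_ofReal (Eventually.of_forall hdnn)]
      exact lt_of_le_of_ne le_top hL
    have hIL : ∫ p : Euc d × Euc d, dist p.1 p.2 ^ s ∂π = L.toReal := by
      rw [hLdef, integral_eq_lintegral_of_nonneg_ae (Eventually.of_forall hdnn)
        hdscont.aestronglyMeasurable]
    -- pointwise bound
    have hpt : ∀ p : Euc d × Euc d,
        ‖E p.1 - E p.2‖ ≤ 2 ^ (1 - s) * ‖ξ‖ ^ s * dist p.1 p.2 ^ s := by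
      intro p
      have h1 : ‖E p.1 - E p.2‖ ≤ min 2 |(inner ℝ p.1 ξ : ℝ) - (inner ℝ p.2 ξ : ℝ)| := by
        refine le_min ?_ (exp_lip _ _)
        calc ‖E p.1 - E p.2‖ ≤ ‖E p.1‖ + ‖E p.2‖ := norm_sub_le _ _
          _ = 2 := by rw [hEnorm, hEnorm]; norm_num
      have h2 : |(inner ℝ p.1 ξ : ℝ) - (inner ℝ p.2 ξ : ℝ)| ≤ dist p.1 p.2 * ‖ξ‖ := by
        rw [← inner_sub_left]
        calc |(inner ℝ (p.1 - p.2) ξ : ℝ)| ≤ ‖p.1 - p.2‖ * ‖ξ‖ := abs_real_inner_le_norm _ _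
          _ = dist p.1 p.2 * ‖ξ‖ := by rw [dist_eq_norm]
      calc ‖E p.1 - E p.2‖ ≤ min 2 (dist p.1 p.2 * ‖ξ‖) := by
            refine le_trans h1 (min_le_min le_rfl h2)
        _ ≤ 2 ^ (1 - s) * (dist p.1 p.2 * ‖ξ‖) ^ s :=
            min_le_rpow hs hs1 (by positivity)
        _ = 2 ^ (1 - s) * ‖ξ‖ ^ s * dist p.1 p.2 ^ s := by
            rw [Real.mul_rpow dist_nonneg (norm_nonneg _)]; ring
    -- main bound
    have hkey : ‖fourierM f ξ - fourierM g ξ‖ ≤ 2 ^ (1 - s) * ‖ξ‖ ^ s * L.toReal := by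
      rw [hfF, hgF, ← integral_sub hint1 hint2]
      calc ‖∫ p : Euc d × Euc d, (E p.1 - E p.2) ∂π‖
          ≤ ∫ p : Euc d × Euc d, ‖E p.1 - E p.2‖ ∂π := norm_integral_le_integral_norm _
        _ ≤ ∫ p : Euc d × Euc d, 2 ^ (1 - s) * ‖ξ‖ ^ s * dist p.1 p.2 ^ s ∂π := by
            refine integral_mono_of_nonneg (Eventually.of_forall fun p => norm_nonneg _)
              (hds.const_mul _) (Eventually.of_forall hpt)
        _ = 2 ^ (1 - s) * ‖ξ‖ ^ s * L.toReal := by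
            rw [integral_const_mul, hIL]
    -- conclude
    have hnξ : (0:ℝ) < ‖ξ‖ ^ s := Real.rpow_pos_of_pos (norm_pos_iff.mpr hξ) s
    have hdivle : ‖fourierM f ξ - fourierM g ξ‖ / ‖ξ‖ ^ s ≤ 2 ^ (1 - s) * L.toReal := by
      rw [div_le_iff₀ hnξ]
      calc ‖fourierM f ξ - fourierM g ξ‖ ≤ 2 ^ (1 - s) * ‖ξ‖ ^ s * L.toReal := hkey
        _ = 2 ^ (1 - s) * L.toReal * ‖ξ‖ ^ s := by ring
    calc ENNReal.ofReal (‖fourierM f ξ - fourierM g ξ‖ / ‖ξ‖ ^ s)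
        ≤ ENNReal.ofReal (2 ^ (1 - s) * L.toReal) := ENNReal.ofReal_le_ofReal hdivle
      _ = ENNReal.ofReal (2 ^ (1 - s)) * ENNReal.ofReal L.toReal :=
          ENNReal.ofReal_mul hc2.le
      _ = ENNReal.ofReal (2 ^ (1 - s)) * L := by rw [ENNReal.ofReal_toReal hL]
  · -- Part 2
    have h2 : ∀ π : Measure (Euc d × Euc d), (π.map Prod.fst = f ∧ π.map Prod.snd = g) →
        transportCost s f g ≤
          (∫⁻ p, ENNReal.ofReal (dist p.1 p.2 ^ (1:ℝ)) ∂π) ^ s := by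
      intro π hπ
      have hπuniv : π Set.univ = 1 := by
        have h := congrArg (fun μ : Measure (Euc d) => μ Set.univ) hπ.1
        simp only [Measure.map_apply measurable_fst MeasurableSet.univ, Set.preimage_univ] at h
        rw [h, hf.measure_univ]
      refine le_trans (iInf₂_le π hπ) ?_
      have hF : AEMeasurable (fun p : Euc d × Euc d => ENNReal.ofReal (dist p.1 p.2)) π :=
        (ENNReal.continuous_ofReal.comp (continuous_fst.dist continuous_snd)).measurable.aemeasurable
      have hhold := ENNReal.lintegral_mul_norm_pow_le (μ := π) hF
        (aemeasurable_const (b := (1:ℝ≥0∞))) hs.le (by linarith : (0:ℝ) ≤ 1 - s)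
        (by ring)
      simp only [ENNReal.one_rpow, mul_one, lintegral_const, hπuniv, one_mul,
        ENNReal.one_rpow, mul_one] at hhold
      calc (∫⁻ p, ENNReal.ofReal (dist p.1 p.2 ^ s) ∂π)
          = ∫⁻ p, (ENNReal.ofReal (dist p.1 p.2)) ^ s ∂π := by
            refine lintegral_congr fun p => ?_
            rw [ENNReal.ofReal_rpow_of_nonneg dist_nonneg hs.le]
        _ ≤ (∫⁻ p, ENNReal.ofReal (dist p.1 p.2) ∂π) ^ s := hhold
        _ = (∫⁻ p, ENNReal.ofReal (dist p.1 p.2 ^ (1:ℝ)) ∂π) ^ s := by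
            congr 1
            exact lintegral_congr fun p => by rw [Real.rpow_one]
    have h3 : transportCost s f g ^ s⁻¹ ≤ transportCost 1 f g := by
      rw [transportCost]
      refine le_iInf fun π => le_iInf fun hπ => ?_
      have := ENNReal.rpow_le_rpow (h2 π hπ) (inv_nonneg.mpr hs.le)
      rwa [← ENNReal.rpow_mul, mul_inv_cancel₀ hs.ne', ENNReal.rpow_one] at this
    calc transportCost s f g = (transportCost s f g ^ s⁻¹) ^ s := by
          rw [← ENNReal.rpow_mul, inv_mul_cancel₀ hs.ne', ENNReal.rpow_one]
      _ ≤ transportCost 1 f g ^ s := ENNReal.rpow_le_rpow h3 hs.le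
end
end

section
/- Let d ≥ 1 and s ∈ (d/2, d/2+1). There exists a constant C = C(d,s) ∈ (0,∞) such that for all Borel probability measures f, g on ℝ^d with |f−g|_1 < ∞ one has ‖f−g‖²_{Ḣ^{−s}} ≤ C · |f−g|_1^{2s−d}. -/
open MeasureTheory Filter
open scoped ENNReal BigOperators Topology

noncomputable section


/-- Squared homogeneous negative Sobolev norm `‖f-g‖²_{Ḣ^{-s}}`, valued in `ℝ≥0∞`. -/
def homSobSq {d : ℕ} (s : ℝ) (f g : Measure (Euc d)) : ℝ≥0∞ :=
  ∫⁻ ξ, ENNReal.ofReal (‖fourierM f ξ - fourierM g ξ‖ ^ 2 / ‖ξ‖ ^ (2 * s))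

open Set in
lemma aux_ball (d : ℕ) {a : ℝ} (ha : a < d) :
    ∫⁻ x : Euc d in Metric.ball 0 1, ENNReal.ofReal (‖x‖ ^ (-a)) < ∞ := by
  rcases le_or_gt a 0 with ha0 | ha0
  · -- bounded by 1 on the ball
    calc ∫⁻ x : Euc d in Metric.ball 0 1, ENNReal.ofReal (‖x‖ ^ (-a))
        ≤ ∫⁻ _ : Euc d in Metric.ball 0 1, 1 := by
          refine setLIntegral_mono' measurableSet_ball fun x hx => ?_
          rw [← ENNReal.ofReal_one]
          refine ENNReal.ofReal_le_ofReal ?_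
          rcases eq_or_ne x 0 with rfl | hx0
          · rw [norm_zero]
            rcases eq_or_lt_of_le ha0 with h | h
            · simp [h]
            · rw [Real.zero_rpow (by linarith)]; norm_num
          · exact Real.rpow_le_one (norm_nonneg _) (le_of_lt (by simpa using hx))
              (by linarith)
      _ < ∞ := by
          rw [lintegral_one, Measure.restrict_apply_univ]
          exact measure_ball_lt_top
  · -- layer cake
    have hd0 : (0:ℝ) < d := lt_trans ha0 ha
    have hmeas : Measurable fun x : Euc d => ‖x‖ ^ (-a) := by fun_prop
    rw [lintegral_eq_lintegral_meas_le _
      (Eventually.of_forall fun x => Real.rpow_nonneg (norm_nonneg _) _) hmeas.aemeasurable]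
    set ν : ℝ → ℝ≥0∞ := fun t =>
      (volume.restrict (Metric.ball (0:Euc d) 1)) {x | t ≤ ‖x‖ ^ (-a)} with hν
    have hsub : ∀ t : ℝ, 0 < t →
        {x : Euc d | t ≤ ‖x‖ ^ (-a)} ⊆ Metric.closedBall 0 (t ^ (-a⁻¹)) := by
      intro t ht x hx
      simp only [mem_setOf_eq] at hx
      have hx0 : x ≠ 0 := by
        rintro rfl
        rw [norm_zero, Real.zero_rpow (neg_ne_zero.2 (ne_of_gt ha0))] at hx
        exact absurd (lt_of_lt_of_le ht hx) (lt_irrefl 0)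
      have hxn : (0:ℝ) < ‖x‖ := norm_pos_iff.2 hx0
      rw [Metric.mem_closedBall, dist_zero_right]
      have h2 : (‖x‖ ^ (-a)) ^ (-a⁻¹) ≤ t ^ (-a⁻¹) :=
        Real.rpow_le_rpow_of_nonpos ht hx (neg_nonpos.2 (inv_nonneg.2 ha0.le))
      rwa [← Real.rpow_mul hxn.le, neg_mul_neg, mul_inv_cancel₀ (ne_of_gt ha0),
        Real.rpow_one] at h2
    have hb1 : ∀ t : ℝ, ν t ≤ volume (Metric.ball (0:Euc d) 1) := fun t =>
      le_trans (measure_mono (subset_univ _)) (le_of_eq (Measure.restrict_apply_univ _))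
    have hb2 : ∀ t : ℝ, 0 < t → ν t ≤
        ENNReal.ofReal (t ^ (-(d / a))) * volume (Metric.ball (0:Euc d) 1) := by
      intro t ht
      calc ν t ≤ volume (Metric.closedBall (0:Euc d) (t ^ (-a⁻¹))) :=
            le_trans (Measure.restrict_apply_le _ _) (measure_mono (hsub t ht))
        _ = ENNReal.ofReal ((t ^ (-a⁻¹)) ^ Module.finrank ℝ (Euc d)) *
              volume (Metric.ball (0:Euc d) 1) :=
            Measure.addHaar_closedBall _ _ (Real.rpow_nonneg ht.le _)
        _ = ENNReal.ofReal (t ^ (-(d / a))) * volume (Metric.ball (0:Euc d) 1) := by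
            rw [← Real.rpow_natCast (t ^ (-a⁻¹)) _, ← Real.rpow_mul ht.le,
              finrank_euclideanSpace_fin]
            ring_nf
    calc ∫⁻ t in Ioi (0:ℝ), ν t
        ≤ ∫⁻ t in Ioc (0:ℝ) 1 ∪ Ioi 1, ν t := lintegral_mono_set Ioi_subset_Ioc_union_Ioi
      _ ≤ (∫⁻ t in Ioc (0:ℝ) 1, ν t) + ∫⁻ t in Ioi 1, ν t := lintegral_union_le _ _ _
      _ < ∞ := by
          refine ENNReal.add_lt_top.2 ⟨?_, ?_⟩
          · calc (∫⁻ t in Ioc (0:ℝ) 1, ν t)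
                ≤ ∫⁻ _ in Ioc (0:ℝ) 1, volume (Metric.ball (0:Euc d) 1) :=
                  setLIntegral_mono' measurableSet_Ioc fun t _ => hb1 t
              _ < ∞ := by
                  rw [setLIntegral_const]
                  exact ENNReal.mul_lt_top measure_ball_lt_top (by simp)
          · calc (∫⁻ t in Ioi (1:ℝ), ν t)
                ≤ ∫⁻ t in Ioi (1:ℝ), ENNReal.ofReal (t ^ (-(d / a))) *
                    volume (Metric.ball (0:Euc d) 1) :=
                  setLIntegral_mono' measurableSet_Ioi fun t ht =>
                    hb2 t (lt_trans one_pos ht)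
              _ = (∫⁻ t in Ioi (1:ℝ), ENNReal.ofReal (t ^ (-(d / a)))) *
                    volume (Metric.ball (0:Euc d) 1) := by
                  rw [lintegral_mul_const' _ _ measure_ball_lt_top.ne]
              _ < ∞ := by
                  refine ENNReal.mul_lt_top ?_ measure_ball_lt_top
                  refine IntegrableOn.setLIntegral_lt_top ?_
                  refine integrableOn_Ioi_rpow_of_lt ?_ one_pos
                  rw [neg_lt_neg_iff, lt_div_iff₀ ha0]
                  linarith

open Set in
lemma aux_outer (d : ℕ) {r : ℝ} (hr : (d:ℝ) < r) :
    ∫⁻ x : Euc d in (Metric.ball 0 1)ᶜ, ENNReal.ofReal (‖x‖ ^ (-r)) < ∞ := by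
  have hr0 : (0:ℝ) < r := lt_of_le_of_lt (Nat.cast_nonneg d) hr
  have hpt : ∀ x : Euc d, x ∈ (Metric.ball (0:Euc d) 1)ᶜ →
      ENNReal.ofReal (‖x‖ ^ (-r)) ≤
        ENNReal.ofReal ((2:ℝ) ^ r) * ENNReal.ofReal ((1 + ‖x‖) ^ (-r)) := by
    intro x hx
    have hx1 : (1:ℝ) ≤ ‖x‖ := by
      simpa using (Metric.mem_ball.not.mp hx)
    have hxpos : (0:ℝ) < ‖x‖ := lt_of_lt_of_le one_pos hx1
    rw [← ENNReal.ofReal_mul (by positivity)]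
    refine ENNReal.ofReal_le_ofReal ?_
    have h3 : (1 + ‖x‖) ^ r ≤ 2 ^ r * ‖x‖ ^ r := by
      rw [← Real.mul_rpow (by norm_num) hxpos.le]
      exact Real.rpow_le_rpow (by positivity) (by linarith) hr0.le
    rw [Real.rpow_neg hxpos.le, Real.rpow_neg (by positivity : (0:ℝ) ≤ 1 + ‖x‖),
      inv_eq_one_div, inv_eq_one_div, mul_one_div, div_le_div_iff₀ (by positivity) (by positivity)]
    linarith
  calc ∫⁻ x : Euc d in (Metric.ball 0 1)ᶜ, ENNReal.ofReal (‖x‖ ^ (-r))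
      ≤ ∫⁻ x : Euc d in (Metric.ball 0 1)ᶜ,
          ENNReal.ofReal ((2:ℝ) ^ r) * ENNReal.ofReal ((1 + ‖x‖) ^ (-r)) :=
        setLIntegral_mono' measurableSet_ball.compl hpt
    _ ≤ ENNReal.ofReal ((2:ℝ) ^ r) * ∫⁻ x : Euc d, ENNReal.ofReal ((1 + ‖x‖) ^ (-r)) := by
        rw [lintegral_const_mul' _ _ ENNReal.ofReal_ne_top]
        exact mul_le_mul_right (setLIntegral_le_lintegral _ _) _
    _ < ∞ := ENNReal.mul_lt_top ENNReal.ofReal_lt_top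
        (finite_integral_one_add_norm (by rwa [finrank_euclideanSpace_fin]))

open Set in
lemma aux_I (d : ℕ) {s : ℝ} (hs : (d : ℝ) / 2 < s) (hs' : s < (d : ℝ) / 2 + 1) :
    ∫⁻ η : Euc d, ENNReal.ofReal ((min 2 ‖η‖) ^ 2 / ‖η‖ ^ (2 * s)) < ∞ := by
  have hs0 : (0:ℝ) < s := lt_of_le_of_lt (by positivity) hs
  rw [← lintegral_add_compl (μ := volume)
    (fun η : Euc d => ENNReal.ofReal ((min 2 ‖η‖) ^ 2 / ‖η‖ ^ (2 * s)))
    (measurableSet_ball (x := (0:Euc d)) (ε := 1))]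
  refine ENNReal.add_lt_top.2 ⟨?_, ?_⟩
  · calc ∫⁻ η : Euc d in Metric.ball 0 1, ENNReal.ofReal ((min 2 ‖η‖) ^ 2 / ‖η‖ ^ (2 * s))
        ≤ ∫⁻ η : Euc d in Metric.ball 0 1, ENNReal.ofReal (‖η‖ ^ (-(2 * s - 2))) := by
          refine setLIntegral_mono' measurableSet_ball fun η hη => ?_
          refine ENNReal.ofReal_le_ofReal ?_
          have hη2 : ‖η‖ ≤ 2 := by
            have := mem_ball_zero_iff.mp hη; linarith
          rw [min_eq_right hη2]
          rcases eq_or_ne η 0 with rfl | hη0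
          · simp [Real.zero_rpow (by positivity : 2 * s ≠ 0)]
            positivity
          · have hpos : (0:ℝ) < ‖η‖ := norm_pos_iff.2 hη0
            rw [neg_sub, Real.rpow_sub hpos, Real.rpow_two]
      _ < ∞ := aux_ball d (by push_cast; linarith)
  · calc ∫⁻ η : Euc d in (Metric.ball 0 1)ᶜ, ENNReal.ofReal ((min 2 ‖η‖) ^ 2 / ‖η‖ ^ (2 * s))
        ≤ ∫⁻ η : Euc d in (Metric.ball 0 1)ᶜ,
            ENNReal.ofReal (4:ℝ) * ENNReal.ofReal (‖η‖ ^ (-(2 * s))) := by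
          refine setLIntegral_mono' measurableSet_ball.compl fun η hη => ?_
          have hη1 : (1:ℝ) ≤ ‖η‖ := by simpa using (Metric.mem_ball.not.mp hη)
          have hpos : (0:ℝ) < ‖η‖ := lt_of_lt_of_le one_pos hη1
          rw [← ENNReal.ofReal_mul (by norm_num)]
          refine ENNReal.ofReal_le_ofReal ?_
          rw [Real.rpow_neg hpos.le, div_eq_mul_inv]
          gcongr ?_ * _
          nlinarith [min_le_left (2:ℝ) ‖η‖, le_min (by norm_num : (0:ℝ) ≤ 2) (norm_nonneg η)]
      _ = ENNReal.ofReal (4:ℝ) *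
            ∫⁻ η : Euc d in (Metric.ball 0 1)ᶜ, ENNReal.ofReal (‖η‖ ^ (-(2 * s))) :=
          lintegral_const_mul' _ _ ENNReal.ofReal_ne_top
      _ < ∞ := ENNReal.mul_lt_top ENNReal.ofReal_lt_top
          (aux_outer d (by linarith))

lemma norm_fourierM_le {d : ℕ} (f : Measure (Euc d)) [IsProbabilityMeasure f] (ξ : Euc d) :
    ‖fourierM f ξ‖ ≤ 1 := by
  refine (norm_integral_le_integral_norm _).trans ?_
  have h : ∀ v : Euc d, ‖Complex.exp (-(Complex.I * ((inner ℝ v ξ : ℝ) : ℂ)))‖ = 1 := by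
    intro v; rw [Complex.norm_exp]; simp
  simp only [h]; simp


theorem stmt2 (d : ℕ) (hd : 1 ≤ d) (s : ℝ) (hs : (d : ℝ) / 2 < s) (hs' : s < (d : ℝ) / 2 + 1) :
    ∃ C : ℝ, 0 < C ∧
      ∀ f g : Measure (Euc d), IsProbabilityMeasure f → IsProbabilityMeasure g →
        fourierDist 1 f g < ∞ →
        homSobSq s f g ≤ ENNReal.ofReal C * fourierDist 1 f g ^ (2 * s - d) := by
  have hs0 : (0:ℝ) < s := lt_of_le_of_lt (by positivity) hs
  set G : Euc d → ℝ≥0∞ := fun η => ENNReal.ofReal ((min 2 ‖η‖) ^ 2 / ‖η‖ ^ (2 * s)) with hG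
  have hGmeas : Measurable G := by rw [hG]; fun_prop
  have hI : ∫⁻ η, G η < ∞ := aux_I d hs hs'
  set I : ℝ≥0∞ := ∫⁻ η, G η with hIdef
  refine ⟨I.toReal + 1, by positivity, ?_⟩
  intro f g hf hg hfin
  haveI := hf; haveI := hg
  set D : ℝ := (fourierDist 1 f g).toReal with hDdef
  have hDof : ENNReal.ofReal D = fourierDist 1 f g := ENNReal.ofReal_toReal hfin.ne
  have hkey : ∀ ξ : Euc d, ξ ≠ 0 → ‖fourierM f ξ - fourierM g ξ‖ ≤ D * ‖ξ‖ := by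
    intro ξ hξ
    have h1 : ENNReal.ofReal (‖fourierM f ξ - fourierM g ξ‖ / ‖ξ‖ ^ (1:ℝ)) ≤
        fourierDist 1 f g := by
      unfold fourierDist
      exact le_iSup₂ (f := fun (ξ : Euc d) (_ : ξ ≠ 0) =>
        ENNReal.ofReal (‖fourierM f ξ - fourierM g ξ‖ / ‖ξ‖ ^ (1:ℝ))) ξ hξ
    rw [← hDof, Real.rpow_one] at h1
    have h2 := (ENNReal.ofReal_le_ofReal_iff ENNReal.toReal_nonneg).mp h1
    exact (div_le_iff₀ (norm_pos_iff.2 hξ)).mp h2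
  have hΔ2 : ∀ ξ : Euc d, ‖fourierM f ξ - fourierM g ξ‖ ≤ 2 := fun ξ =>
    (norm_sub_le _ _).trans (by linarith [norm_fourierM_le f ξ, norm_fourierM_le g ξ])
  rcases eq_or_lt_of_le (ENNReal.toReal_nonneg : (0:ℝ) ≤ D) with hD0 | hD0
  · -- degenerate case: distance is zero
    have hzero : homSobSq s f g ≤ 0 := by
      rw [homSobSq, ← lintegral_zero (μ := (volume : Measure (Euc d)))]
      refine lintegral_mono fun ξ => ?_
      rcases eq_or_ne ξ 0 with rfl | hξ
      · rw [norm_zero, Real.zero_rpow (by positivity), div_zero, ENNReal.ofReal_zero]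
      · have h := hkey ξ hξ
        rw [← hDdef] at hD0
        rw [← hD0, zero_mul] at h
        have h0 : ‖fourierM f ξ - fourierM g ξ‖ = 0 := le_antisymm h (norm_nonneg _)
        rw [h0]
        norm_num
    exact le_trans hzero zero_le
  · have hDne : D ≠ 0 := ne_of_gt hD0
    have hptb : ∀ ξ : Euc d,
        ENNReal.ofReal (‖fourierM f ξ - fourierM g ξ‖ ^ 2 / ‖ξ‖ ^ (2 * s)) ≤
          ENNReal.ofReal (D ^ (2 * s)) * G (D • ξ) := by
      intro ξ
      rcases eq_or_ne ξ 0 with rfl | hξ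
      · rw [norm_zero, Real.zero_rpow (by positivity), div_zero, ENNReal.ofReal_zero]
        exact zero_le
      · have hξn : (0:ℝ) < ‖ξ‖ := norm_pos_iff.2 hξ
        have hnorm : ‖D • ξ‖ = D * ‖ξ‖ := by
          rw [norm_smul, Real.norm_eq_abs, abs_of_pos hD0]
        simp only [hG, hnorm]
        rw [← ENNReal.ofReal_mul (by positivity)]
        refine ENNReal.ofReal_le_ofReal ?_
        rw [Real.mul_rpow hD0.le hξn.le, mul_div_assoc',
          mul_div_mul_left _ _ (by positivity : D ^ (2*s) ≠ 0)]
        gcongr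
        exact le_min (hΔ2 ξ) (hkey ξ hξ)
    have hfr : Module.finrank ℝ (Euc d) = d := finrank_euclideanSpace_fin
    calc homSobSq s f g
        ≤ ∫⁻ ξ, ENNReal.ofReal (D ^ (2 * s)) * G (D • ξ) := lintegral_mono hptb
      _ = ENNReal.ofReal (D ^ (2 * s)) * ∫⁻ ξ, G (D • ξ) :=
          lintegral_const_mul' _ _ ENNReal.ofReal_ne_top
      _ = ENNReal.ofReal (D ^ (2 * s)) * (ENNReal.ofReal (|(D ^ d)⁻¹|) * I) := by
          congr 1
          have : ∫⁻ ξ, G (D • ξ) = ∫⁻ η, G η ∂(Measure.map (D • ·) volume) :=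
            (lintegral_map hGmeas (measurable_const_smul D)).symm
          rw [this, Measure.map_addHaar_smul volume hDne, lintegral_smul_measure, hfr, smul_eq_mul]
      _ = ENNReal.ofReal (D ^ (2 * s - d)) * I := by
          rw [← mul_assoc, ← ENNReal.ofReal_mul (by positivity)]
          congr 2
          rw [abs_of_pos (by positivity), ← Real.rpow_natCast D d,
            ← Real.rpow_neg hD0.le, ← Real.rpow_add hD0]
          ring_nf
          rfl
      _ = fourierDist 1 f g ^ (2 * s - d) * I := by
          rw [← ENNReal.ofReal_rpow_of_pos hD0, hDof]
      _ ≤ ENNReal.ofReal (I.toReal + 1) * fourierDist 1 f g ^ (2 * s - d) := by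
          rw [mul_comm]
          refine mul_le_mul_left ?_ _
          conv_lhs => rw [← ENNReal.ofReal_toReal hI.ne]
          exact ENNReal.ofReal_le_ofReal (by linarith)
end
end

section
/- Let E be a set (or a measurable space), ℓ, N natural numbers with N ≥ 2ℓ ≥ 2, and φ : E^ℓ → ℝ a bounded function. Then for every V = (v_1,…,v_N) ∈ E^N, | (1/N!) Σ_{σ ∈ S_N} φ(v_{σ(1)},…,v_{σ(ℓ)}) − N^{−ℓ} Σ_{(i_1,…,i_ℓ) ∈ {1,…,N}^ℓ} φ(v_{i_1},…,v_{i_ℓ}) | ≤ 2ℓ²‖φ‖_∞/N, where S_N is the symmetric group on N letters and ‖φ‖_∞ = sup |φ|. -/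
open MeasureTheory Filter
open scoped ENNReal BigOperators Topology

noncomputable section

/-- Any injection can be carried to any other injection by a permutation of the codomain. -/
lemma exists_perm_comp' {α β : Type*} [Fintype β] [DecidableEq β]
    {f g : α → β} (hf : Function.Injective f) (hg : Function.Injective g) :
    ∃ σ : Equiv.Perm β, ∀ a, σ (f a) = g a := by
  classical
  let e : {x // x ∈ Set.range f} ≃ {x // x ∈ Set.range g} :=
    (Equiv.ofInjective f hf).symm.trans (Equiv.ofInjective g hg)
  refine ⟨e.extendSubtype, fun a => ?_⟩
  rw [Equiv.extendSubtype_apply_of_mem e (f a) ⟨a, rfl⟩]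
  show ((Equiv.ofInjective g hg) ((Equiv.ofInjective f hf).symm ⟨f a, ⟨a, rfl⟩⟩) : β) = g a
  have h1 : (Equiv.ofInjective f hf).symm ⟨f a, ⟨a, rfl⟩⟩ = a := by
    rw [Equiv.symm_apply_eq, Equiv.ofInjective_apply]
  rw [h1, Equiv.ofInjective_apply]

lemma pow_le_descFactorial_add (N : ℕ) :
    ∀ k, k ≤ N → N ^ k ≤ N.descFactorial k + k * k * N ^ (k - 1) := by
  intro k
  induction k with
  | zero => simp
  | succ k ih =>
    intro hk
    have hkN : k ≤ N := by omega
    have h1 := ih hkN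
    have h2 : N.descFactorial k ≤ N ^ k := Nat.descFactorial_le_pow _ _
    rcases Nat.eq_zero_or_pos k with hk0 | hkpos
    · subst hk0; simp [Nat.descFactorial]
    · have hpow : N ^ k = N * N ^ (k - 1) := by
        rw [← pow_succ']
        congr 1
        omega
      have hdesc : N.descFactorial (k + 1) = (N - k) * N.descFactorial k :=
        Nat.descFactorial_succ N k
      obtain ⟨M, hM⟩ : ∃ M, N = M + k := ⟨N - k, by omega⟩
      have hMk : N - k = M := by omega
      rw [hdesc, hMk]
      have e1 : N ^ (k + 1) = N * N ^ k := by ring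
      have st : N * N ^ k ≤ N * (N.descFactorial k + k * k * N ^ (k - 1)) :=
        Nat.mul_le_mul_left N h1
      rw [e1]
      have : N * (N.descFactorial k + k * k * N ^ (k - 1))
          = N * N.descFactorial k + k * k * N ^ k := by
        rw [hpow]; ring
      rw [this] at st
      have hN' : N * N.descFactorial k = M * N.descFactorial k + k * N.descFactorial k := by
        rw [hM]; ring
      have hkD : k * N.descFactorial k ≤ k * N ^ k := Nat.mul_le_mul_left k h2
      calc N * N ^ k ≤ N * N.descFactorial k + k * k * N ^ k := st
        _ = M * N.descFactorial k + k * N.descFactorial k + k * k * N ^ k := by rw [hN']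
        _ ≤ M * N.descFactorial k + k * N ^ k + k * k * N ^ k := by omega
        _ ≤ M * N.descFactorial k + (k + 1) * (k + 1) * N ^ (k + 1 - 1) := by
            simp only [Nat.add_sub_cancel]; nlinarith

theorem stmt10 {E : Type*} (ℓ N : ℕ) (hℓ : 1 ≤ ℓ) (hN : 2 * ℓ ≤ N)
    (φ : (Fin ℓ → E) → ℝ) (B : ℝ) (hB : ∀ x, |φ x| ≤ B) (V : Fin N → E) :
    |(N.factorial : ℝ)⁻¹
        * ∑ σ : Equiv.Perm (Fin N), φ (fun i => V (σ (Fin.castLE (by omega) i)))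
      - ((N : ℝ) ^ ℓ)⁻¹ * ∑ g : Fin ℓ → Fin N, φ (fun i => V (g i))|
      ≤ 2 * (ℓ : ℝ) ^ 2 * B / N := by
  classical
  have hℓN : ℓ ≤ N := by omega
  have hN0 : 0 < N := by omega
  set c : Fin ℓ → Fin N := Fin.castLE (by omega) with hc
  have hcinj : Function.Injective c := Fin.castLE_injective _
  set ψ : (Fin ℓ → Fin N) → ℝ := fun g => φ (fun i => V (g i)) with hψ
  set S : Finset (Fin ℓ → Fin N) := Finset.univ.filter (fun g => Function.Injective g) with hS
  set F : Equiv.Perm (Fin N) → (Fin ℓ → Fin N) := fun σ i => σ (c i) with hF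
  have hFS : ∀ σ, F σ ∈ S := fun σ =>
    Finset.mem_filter.2 ⟨Finset.mem_univ _, σ.injective.comp hcinj⟩
  set K := (Finset.univ.filter fun σ : Equiv.Perm (Fin N) => F σ = c).card with hK
  -- every fiber over an injective function has cardinality K
  have fib : ∀ g ∈ S, (Finset.univ.filter fun σ => F σ = g).card = K := by
    intro g hg
    obtain ⟨σ₀, hσ₀⟩ := exists_perm_comp' hcinj ((Finset.mem_filter.1 hg).2)
    rw [hK]
    refine Finset.card_nbij' (fun τ => σ₀⁻¹ * τ) (fun σ => σ₀ * σ) ?_ ?_ ?_ ?_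
    · intro τ hτ
      have hFτ : F τ = g := (Finset.mem_filter.1 hτ).2
      refine Finset.mem_filter.2 ⟨Finset.mem_univ _, ?_⟩
      funext i
      have : τ (c i) = g i := congrFun hFτ i
      show (σ₀⁻¹) (τ (c i)) = c i
      rw [this, ← hσ₀ i, Equiv.Perm.inv_def, Equiv.symm_apply_apply]
    · intro σ hσ
      have hFσ : F σ = c := (Finset.mem_filter.1 hσ).2
      refine Finset.mem_filter.2 ⟨Finset.mem_univ _, ?_⟩
      funext i
      have : σ (c i) = c i := congrFun hFσ i
      show σ₀ (σ (c i)) = g i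
      rw [this, hσ₀ i]
    · intro τ _; simp [mul_assoc]
    · intro σ _; simp [← mul_assoc]
  -- key summation identity
  have keysum : ∀ ψ' : (Fin ℓ → Fin N) → ℝ,
      ∑ σ : Equiv.Perm (Fin N), ψ' (F σ) = (K : ℝ) * ∑ g ∈ S, ψ' g := by
    intro ψ'
    rw [← Finset.sum_fiberwise_of_maps_to (fun σ _ => hFS σ) (fun σ => ψ' (F σ))]
    rw [Finset.mul_sum]
    refine Finset.sum_congr rfl fun g hg => ?_
    have : ∀ σ ∈ Finset.univ.filter fun σ => F σ = g, ψ' (F σ) = ψ' g := by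
      intro σ hσ; rw [(Finset.mem_filter.1 hσ).2]
    rw [Finset.sum_congr rfl this, Finset.sum_const, fib g hg, nsmul_eq_mul]
  -- cardinality of S
  have cardS : S.card = N.descFactorial ℓ := by
    rw [hS]
    rw [← Fintype.card_subtype]
    rw [Fintype.card_congr (Equiv.subtypeInjectiveEquivEmbedding (Fin ℓ) (Fin N))]
    rw [Fintype.card_embedding_eq, Fintype.card_fin, Fintype.card_fin]
  -- K * D = N!
  have hKD : K * N.descFactorial ℓ = N.factorial := by
    have h1 : (Finset.univ : Finset (Equiv.Perm (Fin N))).card = ∑ g ∈ S, K := by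
      rw [Finset.card_eq_sum_card_fiberwise (fun σ _ => hFS σ)]
      exact Finset.sum_congr rfl fib
    rw [Finset.sum_const, smul_eq_mul] at h1
    have h2 : (Finset.univ : Finset (Equiv.Perm (Fin N))).card = N.factorial := by
      rw [Finset.card_univ, Fintype.card_perm, Fintype.card_fin]
    rw [h2] at h1
    rw [← cardS, mul_comm]
    exact h1.symm
  have hDpos : 0 < N.descFactorial ℓ :=
    Nat.pos_of_ne_zero fun h => absurd (Nat.descFactorial_eq_zero_iff_lt.1 h) (by omega)
  set D : ℝ := (N.descFactorial ℓ : ℝ) with hD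
  have hDpos' : (0 : ℝ) < D := by rw [hD]; exact_mod_cast hDpos
  set y : ℝ := (N : ℝ) ^ ℓ with hy
  have hypos : (0 : ℝ) < y := by positivity
  have hDy : D ≤ y := by
    rw [hD, hy]
    exact_mod_cast Nat.descFactorial_le_pow N ℓ
  -- sums
  set Tinj : ℝ := ∑ g ∈ S, ψ g with hTinj
  set Tc : ℝ := ∑ g ∈ Finset.univ.filter (fun g : Fin ℓ → Fin N => ¬ Function.Injective g), ψ g
    with hTc
  have hsplit : ∑ g : Fin ℓ → Fin N, ψ g = Tinj + Tc := by
    rw [hTinj, hTc, hS, Finset.sum_filter_add_sum_filter_not]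
  -- cardinality of the complement
  have cardsplit : S.card + (Finset.univ.filter
      (fun g : Fin ℓ → Fin N => ¬ Function.Injective g)).card = N ^ ℓ := by
    rw [hS, Finset.card_filter_add_card_filter_not, Finset.card_univ,
      Fintype.card_fun, Fintype.card_fin, Fintype.card_fin]
  -- bounds
  have hB0 : (0 : ℝ) ≤ B := le_trans (abs_nonneg _) (hB (fun _ => V ⟨0, hN0⟩))
  have habs1 : |Tinj| ≤ D * B := by
    calc |Tinj| ≤ ∑ g ∈ S, |ψ g| := Finset.abs_sum_le_sum_abs _ _
      _ ≤ ∑ _g ∈ S, B := Finset.sum_le_sum fun g _ => hB _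
      _ = S.card * B := by rw [Finset.sum_const, nsmul_eq_mul]
      _ = D * B := by rw [cardS, hD]
  have habs2 : |Tc| ≤ (y - D) * B := by
    have hcard : ((Finset.univ.filter
        (fun g : Fin ℓ → Fin N => ¬ Function.Injective g)).card : ℝ) = y - D := by
      have := cardsplit
      rw [hD, hy]
      push_cast
      have hc' : (S.card : ℝ) = D := by rw [hD, cardS]
      have : ((S.card : ℝ)) + ((Finset.univ.filter
          (fun g : Fin ℓ → Fin N => ¬ Function.Injective g)).card : ℝ) = ((N : ℝ)) ^ ℓ := by
        exact_mod_cast congrArg (Nat.cast : ℕ → ℝ) cardsplit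
      rw [hc', hD] at this
      linarith
    calc |Tc| ≤ ∑ g ∈ _, |ψ g| := Finset.abs_sum_le_sum_abs _ _
      _ ≤ ∑ _g ∈ _, B := Finset.sum_le_sum fun g _ => hB _
      _ = _ * B := by rw [Finset.sum_const, nsmul_eq_mul]
      _ = (y - D) * B := by rw [hcard]
  -- rewrite the permutation sum
  have hperm : ∑ σ : Equiv.Perm (Fin N), φ (fun i => V (σ (Fin.castLE (by omega) i)))
      = (K : ℝ) * Tinj := keysum ψ
  have hfun : ∑ g : Fin ℓ → Fin N, φ (fun i => V (g i)) = Tinj + Tc := hsplit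
  rw [hperm, hfun]
  -- (N!)⁻¹ * K = D⁻¹
  have hfacpos : (0 : ℝ) < (N.factorial : ℝ) := by
    exact_mod_cast N.factorial_pos
  have hKreal : (N.factorial : ℝ)⁻¹ * (K : ℝ) = D⁻¹ := by
    have : (K : ℝ) * D = (N.factorial : ℝ) := by
      rw [hD]; exact_mod_cast congrArg (Nat.cast : ℕ → ℝ) hKD
    field_simp
    linarith [this]
  have hrw : (N.factorial : ℝ)⁻¹ * ((K : ℝ) * Tinj) = D⁻¹ * Tinj := by
    rw [← mul_assoc, hKreal]
  rw [hrw]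
  -- final estimate
  have hinv : y⁻¹ ≤ D⁻¹ := by
    apply inv_anti₀ hDpos' hDy
  have e : D⁻¹ * Tinj - y⁻¹ * (Tinj + Tc) = (D⁻¹ - y⁻¹) * Tinj - y⁻¹ * Tc := by ring
  rw [e]
  have step1 : |(D⁻¹ - y⁻¹) * Tinj - y⁻¹ * Tc| ≤ (D⁻¹ - y⁻¹) * |Tinj| + y⁻¹ * |Tc| := by
    calc |(D⁻¹ - y⁻¹) * Tinj - y⁻¹ * Tc| ≤ |(D⁻¹ - y⁻¹) * Tinj| + |y⁻¹ * Tc| :=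
          abs_sub _ _
      _ = (D⁻¹ - y⁻¹) * |Tinj| + y⁻¹ * |Tc| := by
          have ha : |D⁻¹ - y⁻¹| = D⁻¹ - y⁻¹ := abs_of_nonneg (by linarith)
          have hb : |y⁻¹| = y⁻¹ := abs_of_nonneg (by positivity)
          rw [abs_mul, abs_mul, ha, hb]
  have step2 : (D⁻¹ - y⁻¹) * |Tinj| + y⁻¹ * |Tc| ≤ (D⁻¹ - y⁻¹) * (D * B) + y⁻¹ * ((y - D) * B) := by
    gcongr <;> first | linarith | positivity
  have step3 : (D⁻¹ - y⁻¹) * (D * B) + y⁻¹ * ((y - D) * B) = 2 * B * (y - D) / y := by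
    field_simp
    ring
  -- bound (y - D)/y by ℓ²/N
  set w : ℝ := (N : ℝ) ^ (ℓ - 1) with hw
  have hwpos : (0 : ℝ) < w := by positivity
  have hyw : y = (N : ℝ) * w := by
    rw [hy, hw]
    rw [← pow_succ']
    congr 1
    omega
  have hyD : y - D ≤ (ℓ : ℝ) ^ 2 * w := by
    have hnat := pow_le_descFactorial_add N ℓ hℓN
    have : (N : ℝ) ^ ℓ ≤ D + (ℓ : ℝ) * ℓ * (N : ℝ) ^ (ℓ - 1) := by
      rw [hD]
      exact_mod_cast hnat
    rw [hy, hw]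
    nlinarith [this]
  have hNpos' : (0 : ℝ) < (N : ℝ) := by exact_mod_cast hN0
  have step4 : 2 * B * (y - D) / y ≤ 2 * (ℓ : ℝ) ^ 2 * B / N := by
    rw [div_le_div_iff₀ hypos hNpos']
    have h1 : 2 * B * (y - D) * N ≤ 2 * B * ((ℓ : ℝ) ^ 2 * w) * N := by
      gcongr <;> first | linarith | positivity
    calc 2 * B * (y - D) * N ≤ 2 * B * ((ℓ : ℝ) ^ 2 * w) * N := h1
      _ = 2 * (ℓ : ℝ) ^ 2 * B * ((N : ℝ) * w) := by ring
      _ = 2 * (ℓ : ℝ) ^ 2 * B * y := by rw [hyw]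
  linarith [step1, step2, le_of_eq step3, step4, le_trans step1 (le_trans step2 (le_of_eq step3))]
end
end

section
/- Let E be a measurable space, ℓ ≥ 1, and φ₁,…,φ_ℓ : E → ℝ bounded measurable functions. For Borel probability measures f₁, f₂ on E set R(f) := ∏_{i=1}^ℓ ⟨f, φ_i⟩ and DR[f₁](h) := Σ_{i=1}^ℓ ( ∏_{j≠i} ⟨f₁, φ_j⟩ ) ⟨h, φ_i⟩ for a finite signed measure h. Then (i) |R(f₂) − R(f₁)| ≤ ℓ (∏_{i=1}^ℓ ‖φ_i‖_∞) ‖f₂ − f₁‖_{TV}, and (ii) |R(f₂) − R(f₁) − DR[f₁](f₂ − f₁)| ≤ (ℓ(ℓ−1)/2) (∏_{i=1}^ℓ ‖φ_i‖_∞) ‖f₂ − f₁‖²_{TV}. -/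
open MeasureTheory Filter
open scoped ENNReal BigOperators Topology

noncomputable section


lemma key_s13 {E : Type*} [MeasurableSpace E] (φ : E → ℝ) (hm : Measurable φ) (B : ℝ)
    (hB : ∀ x, |φ x| ≤ B) (f₁ f₂ : Measure E)
    [IsFiniteMeasure f₁] [IsFiniteMeasure f₂] :
    |(∫ x, φ x ∂f₂) - ∫ x, φ x ∂f₁|
      ≤ B * ((f₂.toSignedMeasure - f₁.toSignedMeasure).totalVariation Set.univ).toReal := by
  set μ := f₂.toSignedMeasure - f₁.toSignedMeasure with hμ
  set p := μ.toJordanDecomposition.posPart with hp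
  set q := μ.toJordanDecomposition.negPart with hq
  have hj : μ = p.toSignedMeasure - q.toSignedMeasure := by
    conv_lhs => rw [← μ.toSignedMeasure_toJordanDecomposition]
    rfl
  have hmeas : f₂ + q = f₁ + p := by
    ext s hs
    have h1 : μ s = (f₂ s).toReal - (f₁ s).toReal := by
      rw [hμ]; exact Measure.toSignedMeasure_sub_apply hs
    have h2 : μ s = (p s).toReal - (q s).toReal := by
      rw [hj]; exact Measure.toSignedMeasure_sub_apply hs
    have hf2 : f₂ s ≠ ⊤ := (measure_lt_top _ _).ne
    have hf1 : f₁ s ≠ ⊤ := (measure_lt_top _ _).ne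
    have hps : p s ≠ ⊤ := (measure_lt_top _ _).ne
    have hqs : q s ≠ ⊤ := (measure_lt_top _ _).ne
    simp only [Measure.add_apply]
    rw [← ENNReal.toReal_eq_toReal_iff' (by simp [ENNReal.add_ne_top, hf2, hqs])
      (by simp [ENNReal.add_ne_top, hf1, hps]), ENNReal.toReal_add hf2 hqs,
      ENNReal.toReal_add hf1 hps]
    linarith [h1.symm.trans h2]
  have hint : ∀ (ν : Measure E) [IsFiniteMeasure ν], Integrable φ ν := by
    intro ν _
    exact ⟨hm.aestronglyMeasurable, HasFiniteIntegral.of_bounded (C := B)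
      (Filter.Eventually.of_forall fun x => by simpa using hB x)⟩
  have hadd : (∫ x, φ x ∂f₂) + ∫ x, φ x ∂q = (∫ x, φ x ∂f₁) + ∫ x, φ x ∂p := by
    rw [← integral_add_measure (hint f₂) (hint q), ← integral_add_measure (hint f₁) (hint p),
      hmeas]
  have htv : (μ.totalVariation Set.univ).toReal = (p Set.univ).toReal + (q Set.univ).toReal := by
    rw [SignedMeasure.totalVariation, Measure.add_apply,
      ENNReal.toReal_add (measure_lt_top _ _).ne (measure_lt_top _ _).ne]
  have hbp : |∫ x, φ x ∂p| ≤ B * (p Set.univ).toReal := by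
    simpa [Measure.real] using norm_integral_le_of_norm_le_const (μ := p) (f := φ) (C := B)
      (Filter.Eventually.of_forall fun x => by simpa [Real.norm_eq_abs] using hB x)
  have hbq : |∫ x, φ x ∂q| ≤ B * (q Set.univ).toReal := by
    simpa [Measure.real] using norm_integral_le_of_norm_le_const (μ := q) (f := φ) (C := B)
      (Filter.Eventually.of_forall fun x => by simpa [Real.norm_eq_abs] using hB x)
  have : (∫ x, φ x ∂f₂) - ∫ x, φ x ∂f₁ = (∫ x, φ x ∂p) - ∫ x, φ x ∂q := by linarith
  rw [this, htv]
  calc |(∫ x, φ x ∂p) - ∫ x, φ x ∂q| ≤ |∫ x, φ x ∂p| + |∫ x, φ x ∂q| := abs_sub _ _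
    _ ≤ B * (p Set.univ).toReal + B * (q Set.univ).toReal := add_le_add hbp hbq
    _ = B * ((p Set.univ).toReal + (q Set.univ).toReal) := by ring
lemma algA {ι : Type*} [DecidableEq ι] (a b B : ι → ℝ) (δ : ℝ) (hδ : 0 ≤ δ) (s : Finset ι)
    (ha : ∀ i ∈ s, |a i| ≤ B i) (hb : ∀ i ∈ s, |b i| ≤ B i)
    (hd : ∀ i ∈ s, |a i - b i| ≤ B i * δ) :
    |(∏ i ∈ s, a i) - ∏ i ∈ s, b i| ≤ (s.card : ℝ) * (∏ i ∈ s, B i) * δ := by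
  induction s using Finset.induction_on with
  | empty => simp
  | @insert k s hk ih =>
    have hBnn : ∀ i ∈ s, 0 ≤ B i := fun i hi =>
      le_trans (abs_nonneg _) (ha i (Finset.mem_insert_of_mem hi))
    have hBk : 0 ≤ B k := le_trans (abs_nonneg _) (ha k (Finset.mem_insert_self k s))
    have hprodB : 0 ≤ ∏ i ∈ s, B i := Finset.prod_nonneg hBnn
    have hpa : |∏ i ∈ s, a i| ≤ ∏ i ∈ s, B i := by
      rw [Finset.abs_prod]
      exact Finset.prod_le_prod (fun i _ => abs_nonneg _)
        (fun i hi => ha i (Finset.mem_insert_of_mem hi))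
    have ih' := ih (fun i hi => ha i (Finset.mem_insert_of_mem hi))
      (fun i hi => hb i (Finset.mem_insert_of_mem hi))
      (fun i hi => hd i (Finset.mem_insert_of_mem hi))
    simp only [Finset.prod_insert hk, Finset.card_insert_of_notMem hk]
    have key_s13 : a k * ∏ i ∈ s, a i - b k * ∏ i ∈ s, b i
        = (a k - b k) * ∏ i ∈ s, a i + b k * ((∏ i ∈ s, a i) - ∏ i ∈ s, b i) := by ring
    rw [key_s13]
    have h1 : |(a k - b k) * ∏ i ∈ s, a i| ≤ (B k * δ) * ∏ i ∈ s, B i := by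
      rw [abs_mul]
      exact mul_le_mul (hd k (Finset.mem_insert_self k s)) hpa (abs_nonneg _)
        (by positivity)
    have h2 : |b k * ((∏ i ∈ s, a i) - ∏ i ∈ s, b i)|
        ≤ B k * ((s.card : ℝ) * (∏ i ∈ s, B i) * δ) := by
      rw [abs_mul]
      exact mul_le_mul (hb k (Finset.mem_insert_self k s)) ih' (abs_nonneg _) hBk
    calc _ ≤ |(a k - b k) * ∏ i ∈ s, a i| + |b k * ((∏ i ∈ s, a i) - ∏ i ∈ s, b i)| :=
          abs_add_le _ _
      _ ≤ (B k * δ) * ∏ i ∈ s, B i + B k * ((s.card : ℝ) * (∏ i ∈ s, B i) * δ) :=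
          add_le_add h1 h2
      _ ≤ (↑(s.card + 1) : ℝ) * (B k * ∏ i ∈ s, B i) * δ := by push_cast; nlinarith [Nat.cast_nonneg (α := ℝ) s.card]

lemma algB {ι : Type*} [DecidableEq ι] (a b B : ι → ℝ) (δ : ℝ) (hδ : 0 ≤ δ) (s : Finset ι)
    (ha : ∀ i ∈ s, |a i| ≤ B i) (hb : ∀ i ∈ s, |b i| ≤ B i)
    (hd : ∀ i ∈ s, |a i - b i| ≤ B i * δ) :
    |(∏ i ∈ s, a i) - (∏ i ∈ s, b i)
        - ∑ i ∈ s, (∏ j ∈ s.erase i, b j) * (a i - b i)|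
      ≤ ((s.card : ℝ) * ((s.card : ℝ) - 1) / 2) * (∏ i ∈ s, B i) * δ ^ 2 := by
  induction s using Finset.induction_on with
  | empty => simp
  | @insert k s hk ih =>
    have hBnn : ∀ i ∈ s, 0 ≤ B i := fun i hi =>
      le_trans (abs_nonneg _) (ha i (Finset.mem_insert_of_mem hi))
    have hBk : 0 ≤ B k := le_trans (abs_nonneg _) (ha k (Finset.mem_insert_self k s))
    have hprodB : 0 ≤ ∏ i ∈ s, B i := Finset.prod_nonneg hBnn
    have ha' : ∀ i ∈ s, |a i| ≤ B i := fun i hi => ha i (Finset.mem_insert_of_mem hi)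
    have hb' : ∀ i ∈ s, |b i| ≤ B i := fun i hi => hb i (Finset.mem_insert_of_mem hi)
    have hd' : ∀ i ∈ s, |a i - b i| ≤ B i * δ := fun i hi => hd i (Finset.mem_insert_of_mem hi)
    have ihA := algA a b B δ hδ s ha' hb' hd'
    have ih' := ih ha' hb' hd'
    have hpb : |∏ i ∈ s, b i| ≤ ∏ i ∈ s, B i := by
      rw [Finset.abs_prod]
      exact Finset.prod_le_prod (fun i _ => abs_nonneg _) hb'
    -- rewrite the sum over insert
    have hsum : ∑ i ∈ insert k s, (∏ j ∈ (insert k s).erase i, b j) * (a i - b i)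
        = (∏ j ∈ s, b j) * (a k - b k)
          + b k * ∑ i ∈ s, (∏ j ∈ s.erase i, b j) * (a i - b i) := by
      rw [Finset.sum_insert hk, Finset.erase_insert hk, Finset.mul_sum]
      congr 1
      refine Finset.sum_congr rfl fun i hi => ?_
      have hki : k ≠ i := fun h => hk (h ▸ hi)
      rw [Finset.erase_insert_of_ne hki, Finset.prod_insert (fun h => hk (Finset.erase_subset _ _ h))]
      ring
    simp only [Finset.prod_insert hk, Finset.card_insert_of_notMem hk]
    rw [hsum]
    set Pa := ∏ i ∈ s, a i
    set Pb := ∏ i ∈ s, b i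
    set D := ∑ i ∈ s, (∏ j ∈ s.erase i, b j) * (a i - b i)
    have key_s13 : a k * Pa - b k * Pb - (Pb * (a k - b k) + b k * D)
        = (a k - b k) * (Pa - Pb) + b k * (Pa - Pb - D) := by ring
    rw [key_s13]
    have h1 : |(a k - b k) * (Pa - Pb)| ≤ (B k * δ) * ((s.card : ℝ) * (∏ i ∈ s, B i) * δ) := by
      rw [abs_mul]
      exact mul_le_mul (hd k (Finset.mem_insert_self k s)) ihA (abs_nonneg _) (by positivity)
    have h2 : |b k * (Pa - Pb - D)|
        ≤ B k * (((s.card : ℝ) * ((s.card : ℝ) - 1) / 2) * (∏ i ∈ s, B i) * δ ^ 2) := by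
      rw [abs_mul]
      exact mul_le_mul (hb k (Finset.mem_insert_self k s)) ih' (abs_nonneg _) hBk
    calc _ ≤ |(a k - b k) * (Pa - Pb)| + |b k * (Pa - Pb - D)| := abs_add_le _ _
      _ ≤ (B k * δ) * ((s.card : ℝ) * (∏ i ∈ s, B i) * δ)
          + B k * (((s.card : ℝ) * ((s.card : ℝ) - 1) / 2) * (∏ i ∈ s, B i) * δ ^ 2) :=
          add_le_add h1 h2
      _ ≤ (↑(s.card + 1) * (↑(s.card + 1) - 1) / 2) * (B k * ∏ i ∈ s, B i) * δ ^ 2 := by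
          push_cast; nlinarith [Nat.cast_nonneg (α := ℝ) s.card, mul_nonneg hBk hprodB]

theorem stmt13 {E : Type*} [MeasurableSpace E] (ℓ : ℕ) (hℓ : 1 ≤ ℓ)
    (φ : Fin ℓ → E → ℝ) (hφm : ∀ i, Measurable (φ i)) (B : Fin ℓ → ℝ)
    (hB : ∀ i x, |φ i x| ≤ B i)
    (f₁ f₂ : Measure E) (hf₁ : IsProbabilityMeasure f₁) (hf₂ : IsProbabilityMeasure f₂) :
    (|(∏ i, ∫ x, φ i x ∂f₂) - ∏ i, ∫ x, φ i x ∂f₁|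
        ≤ (ℓ : ℝ) * (∏ i, B i)
          * ((f₂.toSignedMeasure - f₁.toSignedMeasure).totalVariation Set.univ).toReal) ∧
      (|(∏ i, ∫ x, φ i x ∂f₂) - (∏ i, ∫ x, φ i x ∂f₁)
          - ∑ i, (∏ j ∈ Finset.univ.erase i, ∫ x, φ j x ∂f₁)
              * ((∫ x, φ i x ∂f₂) - ∫ x, φ i x ∂f₁)|
        ≤ ((ℓ : ℝ) * ((ℓ : ℝ) - 1) / 2) * (∏ i, B i)
          * ((f₂.toSignedMeasure - f₁.toSignedMeasure).totalVariation Set.univ).toReal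
            ^ 2) := by
  set δ := ((f₂.toSignedMeasure - f₁.toSignedMeasure).totalVariation Set.univ).toReal with hδdef
  have hδ : 0 ≤ δ := ENNReal.toReal_nonneg
  set a : Fin ℓ → ℝ := fun i => ∫ x, φ i x ∂f₂ with hadef
  set b : Fin ℓ → ℝ := fun i => ∫ x, φ i x ∂f₁ with hbdef
  have ha : ∀ i ∈ (Finset.univ : Finset (Fin ℓ)), |a i| ≤ B i := by
    intro i _
    have := norm_integral_le_of_norm_le_const (μ := f₂) (f := φ i) (C := B i)
      (Filter.Eventually.of_forall fun x => by simpa [Real.norm_eq_abs] using hB i x)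
    simpa [hadef, Real.norm_eq_abs, measure_univ] using this
  have hb : ∀ i ∈ (Finset.univ : Finset (Fin ℓ)), |b i| ≤ B i := by
    intro i _
    have := norm_integral_le_of_norm_le_const (μ := f₁) (f := φ i) (C := B i)
      (Filter.Eventually.of_forall fun x => by simpa [Real.norm_eq_abs] using hB i x)
    simpa [hbdef, Real.norm_eq_abs, measure_univ] using this
  have hd : ∀ i ∈ (Finset.univ : Finset (Fin ℓ)), |a i - b i| ≤ B i * δ :=
    fun i _ => key_s13 (φ i) (hφm i) (B i) (hB i) f₁ f₂
  have hcard : ((Finset.univ : Finset (Fin ℓ)).card : ℝ) = (ℓ : ℝ) := by simp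
  constructor
  · have := algA a b B δ hδ Finset.univ ha hb hd
    rwa [hcard] at this
  · have := algB a b B δ hδ Finset.univ ha hb hd
    rwa [hcard] at this
end
end
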